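/- Proposition 5.2 (duality for analytic curves not supported by a line). Let U ⊆ ℂ be a nonempty connected open set and let γ : U → ℂ² be a complex analytic map with γ′(s) ≠ 0 for every s ∈ U. Assume the image γ(U) is not contained in any complex affine line of ℂ². Then for every point P ∈ ℂ², the set of parameters s ∈ U such that P lies on the tangent line to γ at s — that is, the set { s ∈ U : ∃ c ∈ ℂ, P = γ(s) + c•γ′(s) } — is countable. -/

import Mathlib

open Filter Topology

/-- The zero set of an analytic function on a preconnected open set is countable unless
the function vanishes identically. -/
lemma countable_zeroSet_aux {f : ℂ → ℂ} {U : Set ℂ} (hUc : IsPreconnected U)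
    (hf : AnalyticOnNhd ℂ f U) (hne : ¬ Set.EqOn f 0 U) :
    Set.Countable {s ∈ U | f s = 0} := by
  set Z : Set ℂ := {s ∈ U | f s = 0} with hZ
  have hdisc : DiscreteTopology Z := by
    rw [discreteTopology_subtype_iff]
    intro x hx
    rcases (hf x hx.1).eventually_eq_zero_or_eventually_ne_zero with h | h
    · exact absurd (hf.eqOn_zero_of_preconnected_of_frequently_eq_zero hUc hx.1
        ((h.filter_mono nhdsWithin_le_nhds).frequently)) hne
    · have h1 : ∀ᶠ w in 𝓝[≠] x ⊓ 𝓟 Z, f w ≠ 0 :=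
        (h.filter_mono inf_le_left)
      have h2 : ∀ᶠ w in 𝓝[≠] x ⊓ 𝓟 Z, f w = 0 := by
        filter_upwards [Filter.mem_inf_of_right (Filter.mem_principal_self Z)] with w hw
        exact hw.2
      rw [← Filter.empty_mem_iff_bot]
      filter_upwards [h1, h2] with w hw1 hw2
      exact hw1 hw2
  have : Countable Z := by
    haveI := hdisc
    exact TopologicalSpace.separableSpace_iff_countable.mp inferInstance
  exact Set.countable_coe_iff.mp this

/-- **Proposition 5.2.** If a complex analytic regular curve in `ℂ²` is not supported by a
line, then for every point `P` of the plane, the set of parameters whose tangent line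
passes through `P` is countable. -/
theorem countable_tangent_lines_through_point
    (U : Set ℂ) (hUo : IsOpen U) (hUc : IsConnected U)
    (γ : ℂ → ℂ × ℂ) (hγ : AnalyticOnNhd ℂ γ U)
    (hγ' : ∀ s ∈ U, deriv γ s ≠ 0)
    (hline : ¬ ∃ x₀ w : ℂ × ℂ, w ≠ 0 ∧ ∀ s ∈ U, ∃ c : ℂ, γ s = x₀ + c • w)
    (P : ℂ × ℂ) :
    Set.Countable {s ∈ U | ∃ c : ℂ, P = γ s + c • deriv γ s} := by
  -- component functions and their derivatives
  have hγ1 : AnalyticOnNhd ℂ (fun s => (γ s).1) U :=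
    (ContinuousLinearMap.fst ℂ ℂ ℂ).comp_analyticOnNhd hγ
  have hγ2 : AnalyticOnNhd ℂ (fun s => (γ s).2) U :=
    (ContinuousLinearMap.snd ℂ ℂ ℂ).comp_analyticOnNhd hγ
  have hd : AnalyticOnNhd ℂ (deriv γ) U := hγ.deriv
  have hd1 : AnalyticOnNhd ℂ (fun s => (deriv γ s).1) U :=
    (ContinuousLinearMap.fst ℂ ℂ ℂ).comp_analyticOnNhd hd
  have hd2 : AnalyticOnNhd ℂ (fun s => (deriv γ s).2) U :=
    (ContinuousLinearMap.snd ℂ ℂ ℂ).comp_analyticOnNhd hd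
  -- componentwise derivatives
  have hcomp : ∀ s ∈ U, HasDerivAt (fun t => (γ t).1) (deriv γ s).1 s ∧
      HasDerivAt (fun t => (γ t).2) (deriv γ s).2 s := by
    intro s hs
    have hds : HasDerivAt γ (deriv γ s) s := (hγ s hs).differentiableAt.hasDerivAt
    constructor
    · exact ((ContinuousLinearMap.fst ℂ ℂ ℂ).hasFDerivAt).comp_hasDerivAt s hds
    · exact ((ContinuousLinearMap.snd ℂ ℂ ℂ).hasFDerivAt).comp_hasDerivAt s hds
  -- the "tangency" function
  set f : ℂ → ℂ :=
    fun s => ((γ s).1 - P.1) * (deriv γ s).2 - ((γ s).2 - P.2) * (deriv γ s).1 with hf_def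
  have hfa : AnalyticOnNhd ℂ f U :=
    ((hγ1.sub analyticOnNhd_const).mul hd2).sub ((hγ2.sub analyticOnNhd_const).mul hd1)
  have hsubset : {s ∈ U | ∃ c : ℂ, P = γ s + c • deriv γ s} ⊆ {s ∈ U | f s = 0} := by
    rintro s ⟨hs, c, hc⟩
    refine ⟨hs, ?_⟩
    have h1 : P.1 = (γ s).1 + c * (deriv γ s).1 := by rw [hc]; rfl
    have h2 : P.2 = (γ s).2 + c * (deriv γ s).2 := by rw [hc]; rfl
    simp only [hf_def, h1, h2]
    ring
  by_cases hzero : Set.EqOn f 0 U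
  · -- f vanishes identically: the curve lies on a line through P, contradiction
    exfalso
    apply hline
    by_cases hP : ∀ s ∈ U, γ s = P
    · refine ⟨P, (1, 0), by simp, fun s hs => ⟨0, by simp [hP s hs]⟩⟩
    push_neg at hP
    obtain ⟨s₀, hs₀U, hs₀⟩ := hP
    set w : ℂ × ℂ := γ s₀ - P with hw_def
    have hw : w ≠ 0 := sub_ne_zero.mpr hs₀
    -- choose (p, q) such that w.1 * q - w.2 * p ≠ 0
    obtain ⟨p, q, hpq⟩ : ∃ p q : ℂ, w.1 * q - w.2 * p ≠ 0 := by
      by_cases h1 : w.1 = 0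
      · have h2 : w.2 ≠ 0 := by
          intro h2; exact hw (Prod.ext h1 h2)
        exact ⟨1, 0, by simpa [h1] using h2⟩
      · exact ⟨0, 1, by simpa using h1⟩
    -- coordinates of γ - P in the basis (w, v) (up to a nonzero factor)
    set a : ℂ → ℂ := fun s => ((γ s).1 - P.1) * q - ((γ s).2 - P.2) * p with ha_def
    set b : ℂ → ℂ := fun s => ((γ s).1 - P.1) * w.2 - ((γ s).2 - P.2) * w.1 with hb_def
    have haa : AnalyticOnNhd ℂ a U :=
      ((hγ1.sub analyticOnNhd_const).mul analyticOnNhd_const).sub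
        ((hγ2.sub analyticOnNhd_const).mul analyticOnNhd_const)
    have hba : AnalyticOnNhd ℂ b U :=
      ((hγ1.sub analyticOnNhd_const).mul analyticOnNhd_const).sub
        ((hγ2.sub analyticOnNhd_const).mul analyticOnNhd_const)
    have hderiv : ∀ s ∈ U,
        HasDerivAt a ((deriv γ s).1 * q - (deriv γ s).2 * p) s ∧
        HasDerivAt b ((deriv γ s).1 * w.2 - (deriv γ s).2 * w.1) s := by
      intro s hs
      obtain ⟨h1, h2⟩ := hcomp s hs
      exact ⟨((h1.sub_const P.1).mul_const q).sub ((h2.sub_const P.2).mul_const p),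
        ((h1.sub_const P.1).mul_const w.2).sub ((h2.sub_const P.2).mul_const w.1)⟩
    -- the Wronskian-type relation a' b = a b'
    have hrel : ∀ s ∈ U, ((deriv γ s).1 * q - (deriv γ s).2 * p) * b s
        = a s * ((deriv γ s).1 * w.2 - (deriv γ s).2 * w.1) := by
      intro s hs
      have h0 : f s = 0 := hzero hs
      simp only [hf_def] at h0
      simp only [ha_def, hb_def]
      linear_combination (q * w.1 - p * w.2) * h0
    -- values at s₀
    have ha₀ : a s₀ ≠ 0 := by
      have : a s₀ = w.1 * q - w.2 * p := by simp [ha_def, hw_def]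
      rw [this]; exact hpq
    have hb₀ : b s₀ = 0 := by
      have : b s₀ = w.1 * w.2 - w.2 * w.1 := by simp [hb_def, hw_def]
      rw [this]; ring
    -- b vanishes in a neighborhood of s₀
    have hcont : ContinuousAt a s₀ := ((haa s₀ hs₀U).differentiableAt).continuousAt
    obtain ⟨ε, hε, hball⟩ : ∃ ε > 0, Metric.ball s₀ ε ⊆ U ∩ {s | a s ≠ 0} := by
      have h1 : U ∩ {s | a s ≠ 0} ∈ 𝓝 s₀ := by
        apply Filter.inter_mem (hUo.mem_nhds hs₀U)
        exact hcont.preimage_mem_nhds (isOpen_ne.mem_nhds ha₀)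
      exact Metric.mem_nhds_iff.mp h1
    -- on the ball, b / a has zero derivative, hence is constant; it is 0 at s₀
    set g : ℂ → ℂ := fun s => b s / a s with hg_def
    have hgd : ∀ s ∈ Metric.ball s₀ ε, HasDerivAt g 0 s := by
      intro s hsb
      obtain ⟨hsU, hsa⟩ := hball hsb
      obtain ⟨hda, hdb⟩ := hderiv s hsU
      have := hdb.div hda hsa
      have hnum : (((deriv γ s).1 * w.2 - (deriv γ s).2 * w.1) * a s
          - b s * ((deriv γ s).1 * q - (deriv γ s).2 * p)) / (a s) ^ 2 = 0 := by
        rw [div_eq_zero_iff]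
        left
        have := hrel s hsU
        linear_combination -this
      rw [hnum] at this
      exact this
    have hgconst : ∀ s ∈ Metric.ball s₀ ε, g s = g s₀ := by
      intro s hsb
      have hconv : Convex ℝ (Metric.ball s₀ ε) := convex_ball s₀ ε
      have hdiff : DifferentiableOn ℂ g (Metric.ball s₀ ε) :=
        fun x hx => ((hgd x hx).differentiableAt).differentiableWithinAt
      have hfd : ∀ x ∈ Metric.ball s₀ ε, fderivWithin ℂ g (Metric.ball s₀ ε) x = 0 := by
        intro x hx
        rw [fderivWithin_of_isOpen Metric.isOpen_ball hx]
        have := (hgd x hx).deriv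
        ext y
        simp [(hgd x hx).hasFDerivAt.fderiv]
      exact hconv.is_const_of_fderivWithin_eq_zero hdiff hfd hsb (Metric.mem_ball_self hε)
    have hbball : ∀ s ∈ Metric.ball s₀ ε, b s = 0 := by
      intro s hsb
      have h1 : g s = 0 := by
        rw [hgconst s hsb, hg_def]
        simp [hb₀]
      have h2 : a s ≠ 0 := (hball hsb).2
      have h3 : b s = g s * a s := (div_mul_cancel₀ (b s) h2).symm
      rw [h3, h1, zero_mul]
    -- identity theorem: b ≡ 0 on U
    have hbU : Set.EqOn b 0 U := by
      apply hba.eqOn_zero_of_preconnected_of_frequently_eq_zero hUc.isPreconnected hs₀U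
      have hev : ∀ᶠ s in 𝓝 s₀, b s = 0 :=
        Filter.eventually_of_mem (Metric.ball_mem_nhds s₀ hε) hbball
      exact ((hev.filter_mono nhdsWithin_le_nhds).frequently)
    -- so γ lies on the line through P with direction w
    refine ⟨P, w, hw, fun s hs => ?_⟩
    have hb0 : ((γ s).1 - P.1) * w.2 - ((γ s).2 - P.2) * w.1 = 0 := hbU hs
    by_cases h1 : w.1 = 0
    · have h2 : w.2 ≠ 0 := fun h2 => hw (Prod.ext h1 h2)
      refine ⟨((γ s).2 - P.2) / w.2, ?_⟩
      have e1 : (γ s).1 = P.1 := by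
        have h := hb0
        rw [h1, mul_zero, sub_zero] at h
        exact sub_eq_zero.mp ((mul_eq_zero.mp h).resolve_right h2)
      apply Prod.ext
      · simp [Prod.fst_add, Prod.smul_fst, h1, e1]
      · simp only [Prod.snd_add, Prod.smul_snd, smul_eq_mul]
        field_simp
        ring
    · refine ⟨((γ s).1 - P.1) / w.1, ?_⟩
      apply Prod.ext
      · simp only [Prod.fst_add, Prod.smul_fst, smul_eq_mul]
        field_simp
        ring
      · simp only [Prod.snd_add, Prod.smul_snd, smul_eq_mul]
        field_simp
        linear_combination -hb0
  · -- f is not identically zero: its zero set is countable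
    exact (countable_zeroSet_aux hUc.isPreconnected hfa hzero).mono hsubset
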